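/- Let n ≥ 1 and let B ⊆ ℝ^{n+1} be a convex body containing no affine line, with 0 ∈ ∂B and B ⊆ {x ∈ ℝ^{n+1} : x₁ ≥ 0}, and suppose the first standard basis vector e₁ lies in (int N) ∩ R, where N and R are the normal cone (with respect to the standard Euclidean inner product) and recession cone of B. Then for every a > 0, the level set L_a = ∂B ∩ {x ∈ ℝ^{n+1} : x₁ = a} is nonempty, compact, and homeomorphic to the sphere S^{n−1}. -/

import Mathlib

open Set RealInnerProductSpace

noncomputable section

/-- The normal cone of a convex body `B` with respect to the standard Euclidean
inner product. -/
def euclNormalCone {n : ℕ} (B : Set (EuclideanSpace ℝ (Fin (n + 1)))) :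
    Set (EuclideanSpace ℝ (Fin (n + 1))) :=
  {w | w ≠ 0 ∧ ∃ p ∈ frontier B, ∀ x ∈ B, 0 ≤ ⟪x - p, w⟫}

/-- The recession cone of a convex body `B`. -/
def recessionCone {n : ℕ} (B : Set (EuclideanSpace ℝ (Fin n))) :
    Set (EuclideanSpace ℝ (Fin n)) :=
  {v | ∀ x ∈ B, ∀ t : ℝ, 0 ≤ t → x + t • v ∈ B}

/-- The first standard basis vector `e₁` of `ℝ^(n+1)`. -/
def e₁ (n : ℕ) : EuclideanSpace ℝ (Fin (n + 1)) :=
  EuclideanSpace.single 0 1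

def projL (n : ℕ) : EuclideanSpace ℝ (Fin (n+1)) →ₗ[ℝ] EuclideanSpace ℝ (Fin n) where
  toFun x := WithLp.toLp 2 (fun i => x i.succ)
  map_add' _ _ := rfl
  map_smul' _ _ := rfl

def liftL (n : ℕ) : EuclideanSpace ℝ (Fin n) →ₗ[ℝ] EuclideanSpace ℝ (Fin (n+1)) where
  toFun y := WithLp.toLp 2 (Fin.cases (0:ℝ) (fun k => y k) : Fin (n+1) → ℝ)
  map_add' x y := by ext i; induction i using Fin.cases <;> simp [PiLp.add_apply]
  map_smul' c x := by ext i; induction i using Fin.cases <;> simp [PiLp.smul_apply]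

lemma projL_apply {n : ℕ} (x : EuclideanSpace ℝ (Fin (n+1))) (k : Fin n) :
    projL n x k = x k.succ := rfl

lemma liftL_succ {n : ℕ} (y : EuclideanSpace ℝ (Fin n)) (k : Fin n) :
    liftL n y k.succ = y k := by simp [liftL]

lemma liftL_zero {n : ℕ} (y : EuclideanSpace ℝ (Fin n)) : liftL n y 0 = 0 := rfl

lemma e₁_zero (n : ℕ) : e₁ n 0 = 1 := by simp [e₁]

lemma e₁_succ (n : ℕ) (k : Fin n) : e₁ n k.succ = 0 := by
  simp [e₁, EuclideanSpace.single_apply, (Fin.succ_ne_zero k)]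

/-- a vector vanishing at coordinate 0 has the norm of its projection -/
lemma norm_eq_of_zero {n : ℕ} (v : EuclideanSpace ℝ (Fin (n+1))) (hv : v 0 = 0) :
    ‖v‖ = ‖projL n v‖ := by
  rw [EuclideanSpace.norm_eq, EuclideanSpace.norm_eq, Fin.sum_univ_succ, hv]
  simp [projL_apply]

lemma slice_inj {n : ℕ} {a : ℝ} {x y : EuclideanSpace ℝ (Fin (n+1))}
    (hx : x 0 = a) (hy : y 0 = a) (h : projL n x = projL n y) : x = y := by
  ext i
  induction i using Fin.cases with
  | zero => rw [hx, hy]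
  | succ k => exact congrArg (fun v => v k) h

def lift' {n : ℕ} (a : ℝ) (y : EuclideanSpace ℝ (Fin n)) : EuclideanSpace ℝ (Fin (n+1)) :=
  a • e₁ n + liftL n y

lemma lift'_zero {n : ℕ} (a : ℝ) (y : EuclideanSpace ℝ (Fin n)) : lift' a y 0 = a := by
  simp [lift', PiLp.add_apply, PiLp.smul_apply, e₁_zero, liftL_zero]

lemma lift'_succ {n : ℕ} (a : ℝ) (y : EuclideanSpace ℝ (Fin n)) (k : Fin n) :
    lift' a y k.succ = y k := by
  simp [lift', PiLp.add_apply, PiLp.smul_apply, e₁_succ, liftL_succ]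

lemma projL_lift' {n : ℕ} (a : ℝ) (y : EuclideanSpace ℝ (Fin n)) :
    projL n (lift' a y) = y := by
  ext k; rw [projL_apply, lift'_succ]

lemma lift'_projL {n : ℕ} {a : ℝ} {x : EuclideanSpace ℝ (Fin (n+1))} (hx : x 0 = a) :
    lift' a (projL n x) = x :=
  slice_inj (lift'_zero a _) hx (projL_lift' a _)

lemma continuous_lift' {n : ℕ} (a : ℝ) : Continuous (lift' (n := n) a) :=
  continuous_const.add (liftL n).continuous_of_finiteDimensional

lemma dist_lift' {n : ℕ} (a : ℝ) {x : EuclideanSpace ℝ (Fin (n+1))} (hx : x 0 = a)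
    (y : EuclideanSpace ℝ (Fin n)) : dist (lift' a y) x = dist y (projL n x) := by
  rw [dist_eq_norm, dist_eq_norm]
  have h1 : lift' a y - x = lift' a y - lift' a (projL n x) := by rw [lift'_projL hx]
  rw [h1, norm_eq_of_zero _ (by simp [PiLp.sub_apply, lift'_zero]), map_sub,
    projL_lift', projL_lift']

theorem stmt_14 (n : ℕ) (hn : 1 ≤ n)
    (B : Set (EuclideanSpace ℝ (Fin (n + 1))))
    (hconv : Convex ℝ B) (hclosed : IsClosed B) (hint : (interior B).Nonempty)
    (hnoline : ∀ a d : EuclideanSpace ℝ (Fin (n + 1)), d ≠ 0 → ∃ t : ℝ, a + t • d ∉ B)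
    (h0 : (0 : EuclideanSpace ℝ (Fin (n + 1))) ∈ frontier B)
    (hhalf : ∀ x ∈ B, 0 ≤ x 0)
    (he₁N : e₁ n ∈ interior (euclNormalCone B))
    (he₁R : e₁ n ∈ recessionCone B) :
    ∀ a : ℝ, 0 < a →
      (frontier B ∩ {x | x 0 = a}).Nonempty ∧
      IsCompact (frontier B ∩ {x | x 0 = a}) ∧
      Nonempty ((frontier B ∩ {x | x 0 = a} : Set (EuclideanSpace ℝ (Fin (n + 1)))) ≃ₜ
        (Metric.sphere (0 : EuclideanSpace ℝ (Fin n)) 1 : Set (EuclideanSpace ℝ (Fin n)))) := by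
  intro a ha
  -- coordinate bounds on the slice
  have hN : euclNormalCone B ∈ nhds (e₁ n) := mem_interior_iff_mem_nhds.mp he₁N
  obtain ⟨ε, hε, hball⟩ := Metric.mem_nhds_iff.mp hN
  have hδ : 0 < ε/2 := half_pos hε
  have key : ∀ (k : Fin n) (s : ℝ), |s| = 1 → ∃ c, ∀ x ∈ B, x 0 = a → s * x k.succ ≤ c := by
    intro k s hs
    set w := e₁ n + (-(s*(ε/2))) • EuclideanSpace.single k.succ (1:ℝ) with hw
    have hwN : w ∈ euclNormalCone B := by
      apply hball
      rw [Metric.mem_ball, dist_eq_norm]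
      have : w - e₁ n = (-(s*(ε/2))) • EuclideanSpace.single k.succ (1:ℝ) := by
        rw [hw]; abel
      rw [this, norm_smul, EuclideanSpace.norm_single]
      simp only [norm_neg, norm_mul, Real.norm_eq_abs, hs, norm_one, one_mul, mul_one]
      rw [abs_of_pos hδ]; linarith
    obtain ⟨-, p, -, hp⟩ := hwN
    refine ⟨(a - p 0)/(ε/2) + s * p k.succ, fun x hx hxa => ?_⟩
    have h2 := hp x hx
    have h3 : ⟪x - p, w⟫ = ((x:EuclideanSpace ℝ (Fin (n+1))) 0 - p 0)
        + (-(s*(ε/2))) * (x k.succ - p k.succ) := by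
      rw [hw, inner_add_right, real_inner_smul_right, e₁]
      rw [EuclideanSpace.inner_single_right, EuclideanSpace.inner_single_right]
      simp [PiLp.sub_apply]
    rw [h3, hxa] at h2
    have h4 : s*(ε/2) * (x k.succ - p k.succ) ≤ a - p 0 := by linarith
    have h5 : s * (x k.succ - p k.succ) ≤ (a - p 0)/(ε/2) := by
      rw [le_div_iff₀ hδ]; linarith [h4]
    nlinarith [h5]
  have hbd : ∀ k : Fin n, ∃ m : ℝ, ∀ x ∈ B, x 0 = a → |x k.succ| ≤ m := by
    intro k
    obtain ⟨c1, hc1⟩ := key k 1 (by norm_num)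
    obtain ⟨c2, hc2⟩ := key k (-1) (by norm_num)
    refine ⟨max c1 c2, fun x hx hxa => abs_le.2 ⟨?_, ?_⟩⟩
    · have := hc2 x hx hxa; simp at this
      exact le_trans (by linarith) (le_max_right c1 c2) |>.trans_eq rfl |> fun h => by linarith [this, le_max_right c1 c2]
    · exact le_trans (by linarith [hc1 x hx hxa]) (le_max_left c1 c2)
  -- norm bound on the slice
  choose m hm using hbd
  have hC : ∀ x ∈ B, x 0 = a → ‖x‖ ≤ Real.sqrt (a^2 + ∑ k : Fin n, (m k)^2) := by
    intro x hx hxa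
    rw [EuclideanSpace.norm_eq]
    apply Real.sqrt_le_sqrt
    rw [Fin.sum_univ_succ]
    have h0' : ‖x 0‖^2 = a^2 := by rw [hxa, Real.norm_eq_abs, sq_abs]
    refine add_le_add h0'.le (Finset.sum_le_sum fun k _ => ?_)
    calc ‖x k.succ‖^2 = |x k.succ|^2 := by rw [Real.norm_eq_abs]
      _ ≤ (m k)^2 := by
          have := hm k x hx hxa
          exact pow_le_pow_left₀ (abs_nonneg _) this 2
  set C := Real.sqrt (a^2 + ∑ k : Fin n, (m k)^2) with hCdef
  -- a • e₁ ∈ B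
  have h0B : (0 : EuclideanSpace ℝ (Fin (n+1))) ∈ B := by
    rw [← hclosed.closure_eq]; exact h0.1
  have haeB : a • e₁ n ∈ B := by
    have := he₁R 0 h0B a ha.le
    simpa using this
  have hae0 : (a • e₁ n) 0 = a := by
    simp [PiLp.smul_apply, e₁_zero]
  have hCpos : 0 ≤ C := Real.sqrt_nonneg _
  -- slice of B is compact
  have hHcl : IsClosed {x : EuclideanSpace ℝ (Fin (n+1)) | x 0 = a} :=
    isClosed_eq (EuclideanSpace.proj (0 : Fin (n+1))).continuous continuous_const
  have hKcpt : IsCompact (B ∩ {x | x 0 = a}) := by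
    refine Metric.isCompact_of_isClosed_isBounded (hclosed.inter hHcl) ?_
    exact isBounded_iff_forall_norm_le.2 ⟨C, fun x hx => hC x hx.1 hx.2⟩
  -- interior point at level a
  have hu : ∃ u ∈ interior B, u 0 = a := by
    obtain ⟨y, hy⟩ := hint
    have hy0 : 0 ≤ y 0 := hhalf y (interior_subset hy)
    set t := min 1 (a / (y 0 + 1)) with htdef
    have ht0 : 0 < t := lt_min one_pos (div_pos ha (by linarith))
    have ht1 : t ≤ 1 := min_le_left _ _
    have hta : t * (y 0 + 1) ≤ a := by
      have h1 : t ≤ a / (y 0 + 1) := min_le_right _ _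
      rw [← le_div_iff₀ (by linarith : (0:ℝ) < y 0 + 1)]
      exact h1
    have hzlt : t * y 0 < a := by nlinarith
    have hz : t • y ∈ interior B := by
      have := hconv.combo_interior_closure_mem_interior hy h0.1 ht0
        (by linarith : (0:ℝ) ≤ 1 - t) (by ring)
      simpa using this
    set c := a - t * y 0 with hcdef
    have hc : 0 ≤ c := by simp [hcdef]; linarith
    obtain ⟨r, hr, hball⟩ := Metric.isOpen_iff.mp isOpen_interior _ hz
    refine ⟨t • y + c • e₁ n, ?_, ?_⟩
    · rw [mem_interior]
      refine ⟨Metric.ball (t • y + c • e₁ n) r, fun w hw => ?_, Metric.isOpen_ball,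
        Metric.mem_ball_self hr⟩
      have hw' : w - c • e₁ n ∈ Metric.ball (t • y) r := by
        rw [Metric.mem_ball, dist_eq_norm] at hw ⊢
        have : w - c • e₁ n - t • y = w - (t • y + c • e₁ n) := by abel
        rw [this]; exact hw
      have := he₁R (w - c • e₁ n) (interior_subset (hball hw')) c hc
      simpa using this
    · simp [PiLp.add_apply, PiLp.smul_apply, e₁_zero, hcdef]
  obtain ⟨u, huint, hua⟩ := hu
  -- frontier of slice nonempty
  have hne : (frontier B ∩ {x | x 0 = a}).Nonempty := by
    set k0 : Fin n := ⟨0, hn⟩ with hk0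
    set d := EuclideanSpace.single (Fin.succ k0) (1:ℝ) with hd
    set f : ℝ → EuclideanSpace ℝ (Fin (n+1)) := fun t => a • e₁ n + t • d with hf
    have hf0 : ∀ t, f t 0 = a := by
      intro t
      simp [hf, hd, PiLp.add_apply, PiLp.smul_apply, e₁_zero,
        EuclideanSpace.single_apply, (Fin.succ_ne_zero k0).symm]
    have hfc : Continuous f := continuous_const.add (continuous_id.smul continuous_const)
    set S := {t : ℝ | 0 ≤ t ∧ f t ∈ B} with hS
    have hS0 : (0:ℝ) ∈ S := ⟨le_refl 0, by simpa [hf] using haeB⟩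
    have hSbdd : BddAbove S := by
      refine ⟨C + ‖a • e₁ n‖, fun t ht => ?_⟩
      have h1 : ‖f t‖ ≤ C := hC _ ht.2 (hf0 t)
      have h2 : t = ‖t • d‖ := by
        rw [norm_smul, hd, EuclideanSpace.norm_single, norm_one, mul_one,
          Real.norm_eq_abs, abs_of_nonneg ht.1]
      have h3 : ‖t • d‖ ≤ ‖f t‖ + ‖a • e₁ n‖ := by
        have h4 : t • d = f t - a • e₁ n := by
          show t • d = (a • e₁ n + t • d) - a • e₁ n
          abel
        rw [h4]; exact norm_sub_le _ _
      linarith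
    have hScl : IsClosed S := by
      have : S = Ici (0:ℝ) ∩ f ⁻¹' B := by ext t; simp [hS, and_comm]
      rw [this]
      exact isClosed_Ici.inter (hclosed.preimage hfc)
    set T := sSup S with hT
    have hTS : T ∈ S := hScl.csSup_mem ⟨0, hS0⟩ hSbdd
    have hnotint : f T ∉ interior B := by
      intro hintT
      obtain ⟨r, hr, hball'⟩ := Metric.isOpen_iff.mp isOpen_interior _ hintT
      have hmem : T + r/2 ∈ S := by
        refine ⟨by linarith [hTS.1], ?_⟩
        apply interior_subset
        apply hball'
        rw [Metric.mem_ball, dist_eq_norm]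
        have h5 : f (T + r/2) - f T = (r/2) • d := by
          show (a • e₁ n + (T + r/2) • d) - (a • e₁ n + T • d) = (r/2) • d
          rw [add_smul]; abel
        rw [h5, norm_smul, hd, EuclideanSpace.norm_single, norm_one, mul_one,
          Real.norm_eq_abs, abs_of_pos (by linarith)]
        linarith
      have := le_csSup hSbdd hmem
      linarith
    exact ⟨f T, ⟨subset_closure hTS.2, hnotint⟩, hf0 T⟩
  refine ⟨hne, ?_, ?_⟩
  · have hHcl : IsClosed {x : EuclideanSpace ℝ (Fin (n+1)) | x 0 = a} :=
      isClosed_eq (EuclideanSpace.proj (0 : Fin (n+1))).continuous continuous_const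
    exact hKcpt.of_isClosed_subset (isClosed_frontier.inter hHcl)
      (inter_subset_inter_left _ hclosed.frontier_subset)
  -- the projected body
  set K : Set (EuclideanSpace ℝ (Fin n)) := projL n '' (B ∩ {x | x 0 = a}) with hKdef
  have hSliceConv : Convex ℝ ({x : EuclideanSpace ℝ (Fin (n+1)) | x 0 = a}) := by
    intro x hx y hy p q hp hq hpq
    show (p • x + q • y) 0 = a
    simp only [PiLp.add_apply, PiLp.smul_apply, smul_eq_mul]
    rw [show x 0 = a from hx, show y 0 = a from hy, ← add_mul, hpq, one_mul]
  have hKconv : Convex ℝ K := (hconv.inter hSliceConv).linear_image (projL n)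
  have hKcpt' : IsCompact K := hKcpt.image (projL n).continuous_of_finiteDimensional
  -- interior points map to interior points
  have hIntProj : ∀ x : EuclideanSpace ℝ (Fin (n+1)), x 0 = a → x ∈ interior B →
      projL n x ∈ interior K := by
    intro x hxa hxint
    obtain ⟨r, hr, hball⟩ := Metric.isOpen_iff.mp isOpen_interior _ hxint
    rw [mem_interior]
    refine ⟨Metric.ball (projL n x) r, fun y hy => ?_, Metric.isOpen_ball,
      Metric.mem_ball_self hr⟩
    have h1 : lift' a y ∈ Metric.ball x r := by
      rw [Metric.mem_ball, dist_lift' a hxa]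
      exact hy
    exact ⟨lift' a y, ⟨interior_subset (hball h1), lift'_zero a y⟩, projL_lift' a y⟩
  have hKint : (interior K).Nonempty := ⟨projL n u, hIntProj u hua huint⟩
  -- relative interior points are interior points
  have hProjInt : ∀ x : EuclideanSpace ℝ (Fin (n+1)), x 0 = a → projL n x ∈ interior K →
      x ∈ interior B := by
    intro x hxa hxint
    obtain ⟨r, hr, hball⟩ := Metric.isOpen_iff.mp isOpen_interior _ hxint
    obtain ⟨ε, hε, hεlt⟩ : ∃ ε : ℝ, 0 < ε ∧ ε * ‖projL n x - projL n u‖ < r := by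
      have hnorm : 0 ≤ ‖projL n x - projL n u‖ := norm_nonneg _
      refine ⟨r / (2*(‖projL n x - projL n u‖+1)), by positivity, ?_⟩
      rw [div_mul_eq_mul_div, div_lt_iff₀ (by positivity)]
      nlinarith
    have hgK : projL n x + ε • (projL n x - projL n u) ∈ K := by
      apply interior_subset
      apply hball
      rw [Metric.mem_ball, dist_eq_norm, add_sub_cancel_left, norm_smul, Real.norm_eq_abs,
        abs_of_pos hε]
      exact hεlt
    obtain ⟨z, hz, hpz⟩ := hgK
    have hzeq : z = x + ε • (x - u) := by
      apply slice_inj hz.2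
      · show (x + ε • (x - u)) 0 = a
        simp [PiLp.add_apply, PiLp.smul_apply, PiLp.sub_apply, hxa, hua]
      · rw [hpz, map_add, map_smul, map_sub]
    have hzB : x + ε • (x - u) ∈ B := hzeq ▸ hz.1
    have h1ε : (1:ℝ) + ε ≠ 0 := by positivity
    have hcombo : (ε/(1+ε)) • u + (1/(1+ε)) • (x + ε • (x - u)) = x := by
      match_scalars <;> field_simp <;> ring
    have := hconv.combo_interior_closure_mem_interior huint (subset_closure hzB)
      (by positivity : (0:ℝ) < ε/(1+ε)) (by positivity : (0:ℝ) ≤ 1/(1+ε))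
      (by field_simp; ring)
    rwa [hcombo] at this
  -- frontier identification
  have hfrontier : projL n '' (frontier B ∩ {x | x 0 = a}) = frontier K := by
    apply Subset.antisymm
    · rintro y ⟨x, ⟨hxf, hxa⟩, rfl⟩
      have hxB : x ∈ B := hclosed.frontier_subset hxf
      refine ⟨subset_closure ⟨x, ⟨hxB, hxa⟩, rfl⟩, fun hcon => hxf.2 (hProjInt x hxa hcon)⟩
    · intro y hy
      have hyK : y ∈ K := hKcpt'.isClosed.closure_eq ▸ hy.1
      obtain ⟨x, hx, rfl⟩ := hyK
      have hxnotint : x ∉ interior B := fun hcon => hy.2 (hIntProj x hx.2 hcon)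
      exact ⟨x, ⟨⟨subset_closure hx.1, hxnotint⟩, hx.2⟩, rfl⟩
  obtain ⟨h, -, -, himg⟩ := exists_homeomorph_image_interior_closure_frontier_eq_unitBall
    hKconv hKint hKcpt'.isBounded
  have htoMem : ∀ x : {x // x ∈ frontier B ∩ {x | x 0 = a}}, projL n x.1 ∈ frontier K := by
    intro x; rw [← hfrontier]; exact mem_image_of_mem _ x.2
  have hinvMem : ∀ y : {y // y ∈ frontier K}, lift' a y.1 ∈ frontier B ∩ {x | x 0 = a} := by
    intro y
    obtain ⟨x, hx, hpx⟩ : (y : EuclideanSpace ℝ (Fin n)) ∈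
        projL n '' (frontier B ∩ {x | x 0 = a}) := by
      rw [hfrontier]; exact y.2
    have hl : lift' a (projL n x) = x := lift'_projL hx.2
    rw [hpx] at hl
    rw [hl]
    exact hx
  have e1 : (frontier B ∩ {x | x 0 = a} : Set (EuclideanSpace ℝ (Fin (n+1)))) ≃ₜ
      (frontier K : Set (EuclideanSpace ℝ (Fin n))) :=
    { toFun := fun x => ⟨projL n x.1, htoMem x⟩
      invFun := fun y => ⟨lift' a y.1, hinvMem y⟩
      left_inv := fun x => Subtype.ext (lift'_projL x.2.2)
      right_inv := fun y => Subtype.ext (projL_lift' a y.1)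
      continuous_toFun := Continuous.subtype_mk
        ((projL n).continuous_of_finiteDimensional.comp continuous_subtype_val) _
      continuous_invFun := Continuous.subtype_mk
        ((continuous_lift' a).comp continuous_subtype_val) _ }
  exact ⟨e1.trans ((h.image (frontier K)).trans (Homeomorph.setCongr himg))⟩

end
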